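/- Let X* be the optimal solution of the entropy-regularized optimal transport problem min { ⟨C,X⟩ + ⟨log X, X⟩ : X ∈ ℝ^{r×r}, X ≥ 0, X𝟙 = u, Xᵀ𝟙 = v } with u, v > 0 entrywise and 𝟙ᵀu = 𝟙ᵀv = 1. Then X* can be written as X* = exp[−C + λ𝟙ᵀ + 𝟙μᵀ] for some λ, μ ∈ ℝ^r satisfying ‖λ − log u‖_∞ ≤ 1.5‖C‖_∞ + log r and ‖μ − log v‖_∞ ≤ 1.5‖C‖_∞ + log r. -/

import Mathlib

/-- Objective of the entropy-regularized optimal transport problem. -/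
noncomputable def entOTobj {r : ℕ} (C X : Fin r → Fin r → ℝ) : ℝ :=
  (∑ i, ∑ j, C i j * X i j) + ∑ i, ∑ j, X i j * Real.log (X i j)

/-- Feasible set of the entropy-regularized OT problem with marginals `u, v`. -/
def entOTfeas {r : ℕ} (u v : Fin r → ℝ) (X : Fin r → Fin r → ℝ) : Prop :=
  (∀ i j, 0 ≤ X i j) ∧ (∀ i, ∑ j, X i j = u i) ∧ (∀ j, ∑ i, X i j = v j)

lemma entOT_pos (r : ℕ) (C : Fin r → Fin r → ℝ) (u v : Fin r → ℝ)
    (hu : ∀ i, 0 < u i) (hv : ∀ i, 0 < v i)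
    (husum : ∑ i, u i = 1) (hvsum : ∑ i, v i = 1)
    (X : Fin r → Fin r → ℝ) (hfeas : entOTfeas u v X)
    (hopt : ∀ Y, entOTfeas u v Y → entOTobj C X ≤ entOTobj C Y) :
    ∀ i j, 0 < X i j := by
  obtain ⟨hXnn, hXrow, hXcol⟩ := hfeas
  intro i0 j0
  rcases lt_or_eq_of_le (hXnn i0 j0) with h | h
  · exact h
  exfalso
  have hx0 : X i0 j0 = 0 := h.symm
  set Y : Fin r → Fin r → ℝ := fun i j => u i * v j with hY
  have hYfeas : entOTfeas u v Y := by
    refine ⟨fun i j => (mul_pos (hu i) (hv j)).le, fun i => ?_, fun j => ?_⟩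
    · rw [← Finset.mul_sum, hvsum, mul_one]
    · rw [← Finset.sum_mul, husum, one_mul]
  set A : ℝ := entOTobj C Y - entOTobj C X with hA
  set y0 : ℝ := u i0 * v j0 with hy0
  have hy0pos : 0 < y0 := mul_pos (hu i0) (hv j0)
  set t : ℝ := min (1/2) (Real.exp (-(A+1)/y0)) with ht
  have ht0 : 0 < t := lt_min (by norm_num) (Real.exp_pos _)
  have ht1 : t ≤ 1 := le_trans (min_le_left _ _) (by norm_num)
  set Z : Fin r → Fin r → ℝ := fun i j => (1-t) * X i j + t * Y i j with hZ
  have hZfeas : entOTfeas u v Z := by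
    refine ⟨fun i j => ?_, fun i => ?_, fun j => ?_⟩
    · have h1 : 0 ≤ (1-t) * X i j := mul_nonneg (by linarith) (hXnn i j)
      have h2 : 0 ≤ t * Y i j := mul_nonneg ht0.le (mul_pos (hu i) (hv j)).le
      simpa only [hZ] using add_nonneg h1 h2
    · simp only [hZ]
      rw [Finset.sum_add_distrib, ← Finset.mul_sum, ← Finset.mul_sum, hXrow i, hYfeas.2.1 i]
      ring
    · simp only [hZ]
      rw [Finset.sum_add_distrib, ← Finset.mul_sum, ← Finset.mul_sum, hXcol j, hYfeas.2.2 j]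
      ring
  have hconv : ∀ a b : Fin r, Z a b * Real.log (Z a b) ≤
      (1-t) * (X a b * Real.log (X a b)) + t * (Y a b * Real.log (Y a b))
      + (if a = i0 ∧ b = j0 then t * y0 * Real.log t else 0) := by
    intro a b
    by_cases hab : a = i0 ∧ b = j0
    · obtain ⟨ha, hb⟩ := hab
      subst ha; subst hb
      rw [if_pos ⟨rfl, rfl⟩]
      refine le_of_eq ?_
      have hZab : Z a b = t * y0 := by simp only [hZ, hY, hx0, hy0]; ring
      have hYab : Y a b = y0 := rfl
      rw [hZab, hYab, hx0, Real.log_mul ht0.ne' hy0pos.ne']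
      ring
    · rw [if_neg hab, add_zero]
      have hcv := Real.convexOn_mul_log.2 (Set.mem_Ici.mpr (hXnn a b))
        (Set.mem_Ici.mpr (mul_pos (hu a) (hv b)).le)
        (by linarith : (0:ℝ) ≤ 1 - t) ht0.le (by ring)
      simpa only [smul_eq_mul, hZ, hY] using hcv
  have hent : ∑ a, ∑ b, Z a b * Real.log (Z a b) ≤
      (1-t) * (∑ a, ∑ b, X a b * Real.log (X a b)) + t * (∑ a, ∑ b, Y a b * Real.log (Y a b))
      + t * y0 * Real.log t := by
    have h1 : ∑ a, ∑ b, Z a b * Real.log (Z a b) ≤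
        ∑ a, ∑ b, ((1-t) * (X a b * Real.log (X a b)) + t * (Y a b * Real.log (Y a b))
          + (if a = i0 ∧ b = j0 then t * y0 * Real.log t else 0)) :=
      Finset.sum_le_sum (fun a _ => Finset.sum_le_sum (fun b _ => hconv a b))
    refine h1.trans_eq ?_
    have hifsum : ∑ a : Fin r, ∑ b : Fin r,
        (if a = i0 ∧ b = j0 then t * y0 * Real.log t else 0) = t * y0 * Real.log t := by
      simp [ite_and, Finset.sum_ite_eq]
    simp only [Finset.sum_add_distrib, hifsum, ← Finset.mul_sum]
  have hlin : ∑ a, ∑ b, C a b * Z a b =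
      (1-t) * (∑ a, ∑ b, C a b * X a b) + t * (∑ a, ∑ b, C a b * Y a b) := by
    rw [Finset.mul_sum, Finset.mul_sum, ← Finset.sum_add_distrib]
    refine Finset.sum_congr rfl fun a _ => ?_
    rw [Finset.mul_sum, Finset.mul_sum, ← Finset.sum_add_distrib]
    refine Finset.sum_congr rfl fun b _ => ?_
    simp only [hZ]; ring
  have hobjZ : entOTobj C Z ≤ (1-t) * entOTobj C X + t * entOTobj C Y + t * y0 * Real.log t := by
    unfold entOTobj
    rw [hlin]
    linarith [hent]
  have hXZ := hopt Z hZfeas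
  have hstep : 0 ≤ A + y0 * Real.log t := by
    have e1 : (1 - t) * entOTobj C X = entOTobj C X - t * entOTobj C X := by ring
    have e2 : t * (entOTobj C Y + y0 * Real.log t)
        = t * entOTobj C Y + t * y0 * Real.log t := by ring
    have h3 : t * entOTobj C X ≤ t * (entOTobj C Y + y0 * Real.log t) := by
      have := hXZ.trans hobjZ
      linarith
    have h4 := (mul_le_mul_iff_right₀ ht0).mp h3
    simp only [hA]
    linarith
  have hlogt : Real.log t ≤ -(A+1)/y0 := by
    have h1 : Real.log t ≤ Real.log (Real.exp (-(A+1)/y0)) :=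
      Real.log_le_log ht0 (min_le_right _ _)
    rwa [Real.log_exp] at h1
  have : y0 * Real.log t ≤ -(A+1) := by
    have := mul_le_mul_of_nonneg_left hlogt hy0pos.le
    rwa [mul_div_cancel₀ _ hy0pos.ne'] at this
  linarith


lemma entOT_key (r : ℕ) (hr : 0 < r) (C : Fin r → Fin r → ℝ) (u v : Fin r → ℝ)
    (X : Fin r → Fin r → ℝ) (hfeas : entOTfeas u v X)
    (hpos : ∀ i j, 0 < X i j)
    (hopt : ∀ Y, entOTfeas u v Y → entOTobj C X ≤ entOTobj C Y) :
    ∀ i i' j j', (C i j + Real.log (X i j)) + (C i' j' + Real.log (X i' j'))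
      = (C i j' + Real.log (X i j')) + (C i' j + Real.log (X i' j)) := by
  obtain ⟨hXnn, hXrow, hXcol⟩ := hfeas
  intro i i' j j'
  by_cases hii : i = i'
  · subst hii; ring
  by_cases hjj : j = j'
  · subst hjj; ring
  -- perturbation direction D a b = p a * q b
  set p : Fin r → ℝ := fun a => (if a = i then 1 else 0) - (if a = i' then 1 else 0) with hp
  set q : Fin r → ℝ := fun b => (if b = j then 1 else 0) - (if b = j' then 1 else 0) with hq
  have hpsum : ∑ a, p a = 0 := by simp [hp, Finset.sum_ite_eq]
  have hqsum : ∑ b, q b = 0 := by simp [hq, Finset.sum_ite_eq]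
  have hpabs : ∀ a, |p a| ≤ 1 := by
    intro a
    by_cases h1 : a = i <;> by_cases h2 : a = i' <;>
      simp [hp, h1, h2, hii, Ne.symm hii] <;> norm_num
  have hqabs : ∀ b, |q b| ≤ 1 := by
    intro b
    by_cases h1 : b = j <;> by_cases h2 : b = j' <;>
      simp [hq, h1, h2, hjj, Ne.symm hjj] <;> norm_num
  -- epsilon: min entry of X
  have hne : (Finset.univ : Finset (Fin r × Fin r)).Nonempty :=
    ⟨(⟨0, hr⟩, ⟨0, hr⟩), Finset.mem_univ _⟩
  set ε : ℝ := Finset.inf' Finset.univ hne (fun ab : Fin r × Fin r => X ab.1 ab.2) with hε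
  have hεpos : 0 < ε := by
    rw [hε, Finset.lt_inf'_iff]
    exact fun ab _ => hpos ab.1 ab.2
  have hεle : ∀ a b, ε ≤ X a b := fun a b =>
    Finset.inf'_le _ (Finset.mem_univ ((a, b) : Fin r × Fin r))
  -- the perturbed family
  set W : ℝ → Fin r → Fin r → ℝ := fun t a b => X a b + t * (p a * q b) with hW
  have hWfeas : ∀ t : ℝ, |t| ≤ ε → entOTfeas u v (W t) := by
    intro t ht
    refine ⟨fun a b => ?_, fun a => ?_, fun b => ?_⟩
    · have h1 : |t * (p a * q b)| ≤ ε := by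
        rw [abs_mul, abs_mul]
        calc |t| * (|p a| * |q b|) ≤ ε * (1 * 1) := by
              apply mul_le_mul ht (mul_le_mul (hpabs a) (hqabs b) (abs_nonneg _) zero_le_one)
                (by positivity) hεpos.le
          _ = ε := by ring
      have h2 : -ε ≤ t * (p a * q b) := neg_le_of_abs_le h1
      have := hεle a b
      simp only [hW]
      linarith
    · simp only [hW]
      rw [Finset.sum_add_distrib, hXrow a]
      have : ∑ b, t * (p a * q b) = t * p a * ∑ b, q b := by
        rw [Finset.mul_sum]; exact Finset.sum_congr rfl fun b _ => by ring
      rw [this, hqsum, mul_zero, add_zero]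
    · simp only [hW]
      rw [Finset.sum_add_distrib, hXcol b]
      have : ∑ a, t * (p a * q b) = t * q b * ∑ a, p a := by
        rw [Finset.mul_sum]; exact Finset.sum_congr rfl fun a _ => by ring
      rw [this, hpsum, mul_zero, add_zero]
  -- φ and its derivative
  set φ : ℝ → ℝ := fun t => entOTobj C (W t) with hφ
  set s : ℝ := ∑ a, ∑ b, (p a * q b) * (C a b + (Real.log (X a b) + 1)) with hs
  have hderiv : HasDerivAt φ s 0 := by
    have hterm : ∀ a b : Fin r, HasDerivAt
        (fun t => C a b * W t a b + W t a b * Real.log (W t a b))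
        ((p a * q b) * (C a b + (Real.log (X a b) + 1))) 0 := by
      intro a b
      have hl : HasDerivAt (fun t : ℝ => X a b + t * (p a * q b)) (p a * q b) 0 := by
        simpa using (((hasDerivAt_id (0:ℝ)).mul_const (p a * q b)).const_add (X a b))
      have hW0 : X a b + (0:ℝ) * (p a * q b) = X a b := by ring
      have hlog : HasDerivAt (fun x : ℝ => x * Real.log x)
          (Real.log (X a b) + 1) (X a b + (0:ℝ) * (p a * q b)) := by
        rw [hW0]; exact Real.hasDerivAt_mul_log (hpos a b).ne'
      have hcomp := hlog.comp 0 hl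
      have hlin : HasDerivAt (fun t : ℝ => C a b * (X a b + t * (p a * q b)))
          (C a b * (p a * q b)) 0 := hl.const_mul (C a b)
      have := hlin.fun_add hcomp
      simp only [hW]
      refine this.congr_deriv ?_
      ring
    have hsum : HasDerivAt (fun t => ∑ a, ∑ b,
        (C a b * W t a b + W t a b * Real.log (W t a b))) s 0 := by
      rw [hs]
      apply HasDerivAt.fun_sum
      intro a _
      apply HasDerivAt.fun_sum
      intro b _
      exact hterm a b
    have hphieq : φ = fun t => ∑ a, ∑ b, (C a b * W t a b + W t a b * Real.log (W t a b)) := by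
      funext t
      simp only [hφ]
      unfold entOTobj
      rw [← Finset.sum_add_distrib]
      refine Finset.sum_congr rfl fun a _ => ?_
      rw [← Finset.sum_add_distrib]
    rw [hphieq]
    exact hsum
  have hmin : IsLocalMin φ 0 := by
    have hmem : Set.Icc (-ε) ε ∈ nhds (0:ℝ) := Icc_mem_nhds (by linarith) hεpos
    refine Filter.eventually_of_mem hmem fun t ht => ?_
    have habs : |t| ≤ ε := abs_le.mpr ⟨ht.1, ht.2⟩
    have hφ0 : φ 0 = entOTobj C X := by
      simp only [hφ, hW]
      congr 1
      funext a b
      ring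
    have : entOTobj C X ≤ entOTobj C (W t) := hopt (W t) (hWfeas t habs)
    calc φ 0 = entOTobj C X := hφ0
      _ ≤ φ t := this
  have hs0 : s = 0 := hmin.hasDerivAt_eq_zero hderiv
  -- compute s explicitly
  have hcomp : s = (C i j + (Real.log (X i j) + 1)) - (C i j' + (Real.log (X i j') + 1))
      - (C i' j + (Real.log (X i' j) + 1)) + (C i' j' + (Real.log (X i' j') + 1)) := by
    rw [hs]
    have hinner : ∀ a : Fin r, ∑ b, (p a * q b) * (C a b + (Real.log (X a b) + 1))
        = p a * ((C a j + (Real.log (X a j) + 1)) - (C a j' + (Real.log (X a j') + 1))) := by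
      intro a
      have : ∀ b : Fin r, (p a * q b) * (C a b + (Real.log (X a b) + 1))
          = p a * ((if b = j then 1 else 0) * (C a b + (Real.log (X a b) + 1))
            - (if b = j' then 1 else 0) * (C a b + (Real.log (X a b) + 1))) := by
        intro b; simp only [hq]; ring
      rw [Finset.sum_congr rfl fun b _ => this b, ← Finset.mul_sum]
      congr 1
      rw [Finset.sum_sub_distrib]
      simp [Finset.sum_ite_eq, hjj]
    rw [Finset.sum_congr rfl fun a _ => hinner a]
    have : ∀ a : Fin r, p a * ((C a j + (Real.log (X a j) + 1)) - (C a j' + (Real.log (X a j') + 1)))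
        = (if a = i then 1 else 0) * ((C a j + (Real.log (X a j) + 1)) - (C a j' + (Real.log (X a j') + 1)))
          - (if a = i' then 1 else 0) * ((C a j + (Real.log (X a j) + 1)) - (C a j' + (Real.log (X a j') + 1))) := by
      intro a; simp only [hp]; ring
    rw [Finset.sum_congr rfl fun a _ => this a, Finset.sum_sub_distrib]
    simp [Finset.sum_ite_eq, hii]
    ring
  rw [hcomp] at hs0
  linarith


theorem entOT_assemble (r : ℕ) (hr : 0 < r) (C : Fin r → Fin r → ℝ) (u v : Fin r → ℝ)
    (hu : ∀ i, 0 < u i) (hv : ∀ i, 0 < v i)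
    (husum : ∑ i, u i = 1) (hvsum : ∑ i, v i = 1)
    (X : Fin r → Fin r → ℝ)
    (hXrow : ∀ i, ∑ j, X i j = u i) (hXcol : ∀ j, ∑ i, X i j = v j)
    (hpos : ∀ i j, 0 < X i j)
    (key : ∀ i i' j j', (C i j + Real.log (X i j)) + (C i' j' + Real.log (X i' j'))
      = (C i j' + Real.log (X i j')) + (C i' j + Real.log (X i' j))) :
    ∃ lam mu : Fin r → ℝ,
      (∀ i j, X i j = Real.exp (-C i j + lam i + mu j)) ∧
      (∀ i, |lam i - Real.log (u i)| ≤ 1.5 * (⨆ i : Fin r, ⨆ j : Fin r, |C i j|) + Real.log r) ∧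
      (∀ j, |mu j - Real.log (v j)| ≤ 1.5 * (⨆ i : Fin r, ⨆ j : Fin r, |C i j|) + Real.log r) := by
  have hFin : Nonempty (Fin r) := ⟨⟨0, hr⟩⟩
  set z : Fin r := ⟨0, hr⟩ with hz
  set g : Fin r → Fin r → ℝ := fun i j => C i j + Real.log (X i j) with hg
  set lam0 : Fin r → ℝ := fun i => g i z with hlam0
  set mu0 : Fin r → ℝ := fun j => g z j - g z z with hmu0
  have hsplit : ∀ i j, g i j = lam0 i + mu0 j := by
    intro i j
    have := key i z j z
    simp only [hg, hlam0, hmu0] at *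
    linarith
  have hform0 : ∀ i j, X i j = Real.exp (-C i j + lam0 i + mu0 j) := by
    intro i j
    have h1 : Real.log (X i j) = -C i j + lam0 i + mu0 j := by
      have := hsplit i j
      simp only [hg] at this
      linarith
    rw [← h1, Real.exp_log (hpos i j)]
  -- normalize
  set N : ℝ := ∑ i, Real.exp (lam0 i) with hN
  set M : ℝ := ∑ j, Real.exp (mu0 j) with hM
  have hNpos : 0 < N := Finset.sum_pos (fun i _ => Real.exp_pos _) Finset.univ_nonempty
  have hMpos : 0 < M := Finset.sum_pos (fun i _ => Real.exp_pos _) Finset.univ_nonempty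
  set c : ℝ := (Real.log M - Real.log N) / 2 with hc
  set lam : Fin r → ℝ := fun i => lam0 i + c with hlam
  set mu : Fin r → ℝ := fun j => mu0 j - c with hmu
  have hform : ∀ i j, X i j = Real.exp (-C i j + lam i + mu j) := by
    intro i j
    rw [hform0 i j]
    congr 1
    simp only [hlam, hmu]
    ring
  set SN : ℝ := ∑ i, Real.exp (lam i) with hSN
  set SM : ℝ := ∑ j, Real.exp (mu j) with hSM
  have hSNpos : 0 < SN := Finset.sum_pos (fun i _ => Real.exp_pos _) Finset.univ_nonempty
  have hSMpos : 0 < SM := Finset.sum_pos (fun i _ => Real.exp_pos _) Finset.univ_nonempty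
  have hSNe : SN = Real.exp c * N := by
    rw [hSN, hN, Finset.mul_sum]
    refine Finset.sum_congr rfl fun i _ => ?_
    rw [← Real.exp_add]
    congr 1
    simp only [hlam]
    ring
  have hSMe : SM = Real.exp (-c) * M := by
    rw [hSM, hM, Finset.mul_sum]
    refine Finset.sum_congr rfl fun j _ => ?_
    rw [← Real.exp_add]
    congr 1
    simp only [hmu]
    ring
  set L : ℝ := Real.log SM with hL
  have hlogSN : Real.log SN = L := by
    rw [hL, hSNe, hSMe, Real.log_mul (Real.exp_pos _).ne' hNpos.ne',
      Real.log_mul (Real.exp_pos _).ne' hMpos.ne', Real.log_exp, Real.log_exp, hc]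
    ring
  have hexpL_SM : Real.exp L = SM := Real.exp_log hSMpos
  have hexpL_SN : Real.exp L = SN := by rw [← hlogSN]; exact Real.exp_log hSNpos
  -- bound on C
  set K : ℝ := ⨆ i : Fin r, ⨆ j : Fin r, |C i j| with hKdef
  have hK : ∀ a b, |C a b| ≤ K := by
    intro a b
    have h1 : |C a b| ≤ ⨆ j : Fin r, |C a j| :=
      le_ciSup (f := fun j => |C a j|) (Set.finite_range _).bddAbove b
    refine h1.trans ?_
    exact le_ciSup (f := fun i => ⨆ j : Fin r, |C i j|) (Set.finite_range _).bddAbove a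
  have hK0 : 0 ≤ K := le_trans (abs_nonneg _) (hK z z)
  -- row inequalities
  have hrowhi : ∀ i, u i ≤ Real.exp (lam i + K + L) := by
    intro i
    have h1 : u i = ∑ j, Real.exp (-C i j + lam i + mu j) := by
      rw [← hXrow i]
      exact Finset.sum_congr rfl fun j _ => hform i j
    have h2 : ∑ j, Real.exp (-C i j + lam i + mu j) ≤ ∑ j, Real.exp (lam i + K) * Real.exp (mu j) := by
      refine Finset.sum_le_sum fun j _ => ?_
      rw [← Real.exp_add]
      apply Real.exp_le_exp.mpr
      have := (abs_le.mp (hK i j)).1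
      linarith
    rw [h1]
    calc ∑ j, Real.exp (-C i j + lam i + mu j) ≤ Real.exp (lam i + K) * SM := by
          rw [← Finset.mul_sum] at h2; exact h2
      _ = Real.exp (lam i + K + L) := by rw [← hexpL_SM, ← Real.exp_add]
  have hrowlo : ∀ i, Real.exp (lam i - K + L) ≤ u i := by
    intro i
    have h1 : u i = ∑ j, Real.exp (-C i j + lam i + mu j) := by
      rw [← hXrow i]
      exact Finset.sum_congr rfl fun j _ => hform i j
    have h2 : ∑ j, Real.exp (lam i - K) * Real.exp (mu j) ≤ ∑ j, Real.exp (-C i j + lam i + mu j) := by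
      refine Finset.sum_le_sum fun j _ => ?_
      rw [← Real.exp_add]
      apply Real.exp_le_exp.mpr
      have := (abs_le.mp (hK i j)).2
      linarith
    rw [h1]
    calc Real.exp (lam i - K + L) = Real.exp (lam i - K) * SM := by
          rw [← hexpL_SM, ← Real.exp_add]
      _ ≤ ∑ j, Real.exp (-C i j + lam i + mu j) := by rw [← Finset.mul_sum] at h2; exact h2
  -- column inequalities
  have hcolhi : ∀ j, v j ≤ Real.exp (mu j + K + L) := by
    intro j
    have h1 : v j = ∑ i, Real.exp (-C i j + lam i + mu j) := by
      rw [← hXcol j]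
      exact Finset.sum_congr rfl fun i _ => hform i j
    have h2 : ∑ i, Real.exp (-C i j + lam i + mu j) ≤ ∑ i, Real.exp (mu j + K) * Real.exp (lam i) := by
      refine Finset.sum_le_sum fun i _ => ?_
      rw [← Real.exp_add]
      apply Real.exp_le_exp.mpr
      have := (abs_le.mp (hK i j)).1
      linarith
    rw [h1]
    calc ∑ i, Real.exp (-C i j + lam i + mu j) ≤ Real.exp (mu j + K) * SN := by
          rw [← Finset.mul_sum] at h2; exact h2
      _ = Real.exp (mu j + K + L) := by rw [← hexpL_SN, ← Real.exp_add]
  have hcollo : ∀ j, Real.exp (mu j - K + L) ≤ v j := by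
    intro j
    have h1 : v j = ∑ i, Real.exp (-C i j + lam i + mu j) := by
      rw [← hXcol j]
      exact Finset.sum_congr rfl fun i _ => hform i j
    have h2 : ∑ i, Real.exp (mu j - K) * Real.exp (lam i) ≤ ∑ i, Real.exp (-C i j + lam i + mu j) := by
      refine Finset.sum_le_sum fun i _ => ?_
      rw [← Real.exp_add]
      apply Real.exp_le_exp.mpr
      have := (abs_le.mp (hK i j)).2
      linarith
    rw [h1]
    calc Real.exp (mu j - K + L) = Real.exp (mu j - K) * SN := by
          rw [← hexpL_SN, ← Real.exp_add]
      _ ≤ ∑ i, Real.exp (-C i j + lam i + mu j) := by rw [← Finset.mul_sum] at h2; exact h2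
  -- bound |L| ≤ K/2
  have hLup : 2 * L - K ≤ 0 := by
    have h1 : ∑ i, Real.exp (lam i - K + L) ≤ ∑ i, u i :=
      Finset.sum_le_sum fun i _ => hrowlo i
    have h2 : ∑ i, Real.exp (lam i - K + L) = Real.exp (2 * L - K) := by
      have : ∀ i : Fin r, Real.exp (lam i - K + L) = Real.exp (L - K) * Real.exp (lam i) := by
        intro i; rw [← Real.exp_add]; congr 1; ring
      rw [Finset.sum_congr rfl fun i _ => this i, ← Finset.mul_sum, ← hSN, ← hexpL_SN,
        ← Real.exp_add]
      congr 1
      ring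
    rw [h2, husum] at h1
    have := Real.exp_le_exp.mp (by rwa [Real.exp_zero] : Real.exp (2*L - K) ≤ Real.exp 0)
    linarith
  have hLdown : 0 ≤ 2 * L + K := by
    have h1 : ∑ i, u i ≤ ∑ i, Real.exp (lam i + K + L) :=
      Finset.sum_le_sum fun i _ => hrowhi i
    have h2 : ∑ i, Real.exp (lam i + K + L) = Real.exp (2 * L + K) := by
      have : ∀ i : Fin r, Real.exp (lam i + K + L) = Real.exp (L + K) * Real.exp (lam i) := by
        intro i; rw [← Real.exp_add]; congr 1; ring
      rw [Finset.sum_congr rfl fun i _ => this i, ← Finset.mul_sum, ← hSN, ← hexpL_SN,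
        ← Real.exp_add]
      congr 1
      ring
    rw [h2, husum] at h1
    have := Real.exp_le_exp.mp (by rwa [Real.exp_zero] : Real.exp 0 ≤ Real.exp (2*L + K))
    linarith
  have hlogr : 0 ≤ Real.log r := Real.log_nonneg (by exact_mod_cast hr)
  clear_value lam mu L K SN SM c lam0 mu0 N M g z
  refine ⟨lam, mu, hform, fun i => ?_, fun j => ?_⟩
  · have h1 : Real.log (u i) ≤ lam i + K + L :=
      (Real.log_le_iff_le_exp (hu i)).mpr (by simpa using hrowhi i)
    have h2 : lam i - K + L ≤ Real.log (u i) :=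
      (Real.le_log_iff_exp_le (hu i)).mpr (hrowlo i)
    have hb1 : lam i - Real.log (u i) ≤ K - L := by linarith
    have hb2 : -K - L ≤ lam i - Real.log (u i) := by linarith
    have hL2 : L ≤ K/2 := by linarith
    have hL3 : -(K/2) ≤ L := by linarith
    rw [abs_le]
    refine ⟨by linarith, by linarith⟩
  · have h1 : Real.log (v j) ≤ mu j + K + L :=
      (Real.log_le_iff_le_exp (hv j)).mpr (by simpa using hcolhi j)
    have h2 : mu j - K + L ≤ Real.log (v j) :=
      (Real.le_log_iff_exp_le (hv j)).mpr (hcollo j)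
    have hb1 : mu j - Real.log (v j) ≤ K - L := by linarith
    have hb2 : -K - L ≤ mu j - Real.log (v j) := by linarith
    have hL2 : L ≤ K/2 := by linarith
    have hL3 : -(K/2) ≤ L := by linarith
    rw [abs_le]
    refine ⟨by linarith, by linarith⟩


/-- The optimal solution of the entropy-regularized OT problem with strictly positive
probability marginals has the form `X* = exp[−C + λ𝟙ᵀ + 𝟙μᵀ]` with dual variables
satisfying `‖λ − log u‖_∞ ≤ 1.5‖C‖_∞ + log r` and `‖μ − log v‖_∞ ≤ 1.5‖C‖_∞ + log r`. -/
theorem entOT_dual_bounds (r : ℕ) (hr : 0 < r) (C : Fin r → Fin r → ℝ) (u v : Fin r → ℝ)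
    (hu : ∀ i, 0 < u i) (hv : ∀ i, 0 < v i)
    (husum : ∑ i, u i = 1) (hvsum : ∑ i, v i = 1)
    (X : Fin r → Fin r → ℝ) (hfeas : entOTfeas u v X)
    (hopt : ∀ Y, entOTfeas u v Y → entOTobj C X ≤ entOTobj C Y) :
    ∃ lam mu : Fin r → ℝ,
      (∀ i j, X i j = Real.exp (-C i j + lam i + mu j)) ∧
      (∀ i, |lam i - Real.log (u i)| ≤ 1.5 * (⨆ i : Fin r, ⨆ j : Fin r, |C i j|) + Real.log r) ∧
      (∀ j, |mu j - Real.log (v j)| ≤ 1.5 * (⨆ i : Fin r, ⨆ j : Fin r, |C i j|) + Real.log r) := by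
  have hpos := entOT_pos r C u v hu hv husum hvsum X hfeas hopt
  have key := entOT_key r hr C u v X hfeas hpos hopt
  exact entOT_assemble r hr C u v hu hv husum hvsum X hfeas.2.1 hfeas.2.2 hpos key
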